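/- For every n-player cake-cutting instance in class X(2), there exists an envy-free contiguous allocation in which every player's interval contains the more valuable of his two owned pieces; in particular, this allocation has utilitarian welfare at least n/2, and hence every envy-free contiguous allocation of maximal utilitarian welfare has utilitarian welfare at least n/2. -/

import Mathlib

open MeasureTheory Set

/-- An `n`-player cake-cutting instance: continuous nonnegative density functions
on `[0,1]`, each of total integral `1`. -/
structure CakeInstance (n : ℕ) where
  d : Fin n → ℝ → ℝ
  cont : ∀ i, ContinuousOn (d i) (Set.Icc 0 1)
  nonneg : ∀ i, ∀ x ∈ Set.Icc (0:ℝ) 1, 0 ≤ d i x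
  total : ∀ i, ∫ x in (0:ℝ)..1, d i x = 1

namespace CakeInstance

/-- Value of player `i` for the interval `[a,b]`. -/
noncomputable def ival {n : ℕ} (C : CakeInstance n) (i : Fin n) (a b : ℝ) : ℝ :=
  ∫ x in a..b, C.d i x

/-- Value of player `i` for a set `S`. -/
noncomputable def sval {n : ℕ} (C : CakeInstance n) (i : Fin n) (S : Set ℝ) : ℝ :=
  ∫ x in S, C.d i x

end CakeInstance

/-- A contiguous allocation: weakly increasing cut points `x 0 = 0 ≤ … ≤ x n = 1`
together with a permutation `σ` assigning the `j`-th interval `[x j, x (j+1)]`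
to player `σ j`. -/
structure ContigAlloc (n : ℕ) where
  x : Fin (n+1) → ℝ
  mono : Monotone x
  first : x 0 = 0
  last : x (Fin.last n) = 1
  σ : Equiv.Perm (Fin n)

/-- The (closed) interval received by player `i` in a contiguous allocation. -/
def cpiece {n : ℕ} (A : ContigAlloc n) (i : Fin n) : Set ℝ :=
  Set.Icc (A.x (A.σ.symm i).castSucc) (A.x (A.σ.symm i).succ)

/-- Value of player `i` for the interval received by player `j`. -/
noncomputable def cval {n : ℕ} (C : CakeInstance n) (A : ContigAlloc n) (i j : Fin n) : ℝ :=
  C.ival i (A.x (A.σ.symm j).castSucc) (A.x (A.σ.symm j).succ)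

/-- Utilitarian welfare of a contiguous allocation. -/
noncomputable def cWelfare {n : ℕ} (C : CakeInstance n) (A : ContigAlloc n) : ℝ :=
  ∑ i, cval C A i i

/-- Egalitarian welfare of a contiguous allocation. -/
noncomputable def cEgal {n : ℕ} (C : CakeInstance n) (A : ContigAlloc n) : ℝ :=
  ⨅ i, cval C A i i

/-- A contiguous allocation is envy-free if nobody prefers another player's interval. -/
def cEnvyFree {n : ℕ} (C : CakeInstance n) (A : ContigAlloc n) : Prop :=
  ∀ i j, cval C A i j ≤ cval C A i i

/-- A `k`-piece allocation: each player `i` receives the union of (at most) `k`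
closed intervals `[lo i m, hi i m] ⊆ [0,1]` (possibly degenerate); all these
intervals are pairwise non-overlapping and together they cover `[0,1]`. -/
structure KPieceAlloc (n k : ℕ) where
  lo : Fin n → Fin k → ℝ
  hi : Fin n → Fin k → ℝ
  le : ∀ i m, lo i m ≤ hi i m
  sub : ∀ i m, Set.Icc (lo i m) (hi i m) ⊆ Set.Icc (0:ℝ) 1
  nonoverlap : ∀ i m i' m', (i, m) ≠ (i', m') →
      Set.Ioo (lo i m) (hi i m) ∩ Set.Ioo (lo i' m') (hi i' m') = ∅
  cover : (⋃ i, ⋃ m, Set.Icc (lo i m) (hi i m)) = Set.Icc (0:ℝ) 1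

/-- Value of player `i` for the portion received by player `j` in a `k`-piece allocation. -/
noncomputable def kval {n k : ℕ} (C : CakeInstance n) (A : KPieceAlloc n k) (i j : Fin n) : ℝ :=
  ∑ m, C.ival i (A.lo j m) (A.hi j m)

/-- Utilitarian welfare of a `k`-piece allocation. -/
noncomputable def kWelfare {n k : ℕ} (C : CakeInstance n) (A : KPieceAlloc n k) : ℝ :=
  ∑ i, kval C A i i

/-- Egalitarian welfare of a `k`-piece allocation. -/
noncomputable def kEgal {n k : ℕ} (C : CakeInstance n) (A : KPieceAlloc n k) : ℝ :=
  ⨅ i, kval C A i i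

/-- A `k`-piece allocation is envy-free if nobody prefers another player's portion. -/
def kEnvyFree {n k : ℕ} (C : CakeInstance n) (A : KPieceAlloc n k) : Prop :=
  ∀ i j, kval C A i j ≤ kval C A i i

/-- A witness that an `n`-player cake-cutting instance lies in the class `X(k)`:
cut points `0 = c 0 < c 1 < … < c (n*k) = 1` and an ownership map under which each
player owns exactly `k` of the pieces `[c j, c (j+1)]` and values the unowned pieces `0`. -/
structure XkWitness {n : ℕ} (C : CakeInstance n) (k : ℕ) where
  c : Fin (n*k+1) → ℝ
  mono : StrictMono c
  first : c 0 = 0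
  last : c (Fin.last (n*k)) = 1
  owner : Fin (n*k) → Fin n
  ownCount : ∀ i : Fin n, (Finset.univ.filter fun j => owner j = i).card = k
  zeroVal : ∀ (i : Fin n) (j : Fin (n*k)), owner j ≠ i →
      C.ival i (c j.castSucc) (c j.succ) = 0

/-- The `j`-th owned piece, as a set. -/
def XkWitness.pieceSet {n k : ℕ} {C : CakeInstance n} (W : XkWitness C k)
    (j : Fin (n*k)) : Set ℝ :=
  Set.Icc (W.c j.castSucc) (W.c j.succ)

/-- Value of player `i` for the `j`-th owned piece. -/
noncomputable def XkWitness.pieceVal {n k : ℕ} {C : CakeInstance n} (W : XkWitness C k)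
    (i : Fin n) (j : Fin (n*k)) : ℝ :=
  C.ival i (W.c j.castSucc) (W.c j.succ)

/-- A `k`-piece allocation gives each player exactly the pieces he owns:
every owned piece occurs among its owner's allocated intervals. -/
def XkWitness.givesOwnedPieces {n k : ℕ} {C : CakeInstance n} (W : XkWitness C k)
    (A : KPieceAlloc n k) : Prop :=
  ∀ j : Fin (n*k), ∃ m : Fin k,
    A.lo (W.owner j) m = W.c j.castSucc ∧ A.hi (W.owner j) m = W.c j.succ


section Helpers

lemma aux_intble {n : ℕ} (C : CakeInstance n) (i : Fin n) {a b : ℝ}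
    (ha : a ∈ Set.Icc (0:ℝ) 1) (hb : b ∈ Set.Icc (0:ℝ) 1) :
    IntervalIntegrable (C.d i) volume a b := by
  apply ContinuousOn.intervalIntegrable
  apply (C.cont i).mono
  rw [← Set.uIcc_of_le (zero_le_one (α := ℝ))]
  exact Set.uIcc_subset_uIcc (by simpa [Set.uIcc_of_le (zero_le_one (α := ℝ))] using ha)
    (by simpa [Set.uIcc_of_le (zero_le_one (α := ℝ))] using hb)

lemma aux_nonneg {n : ℕ} (C : CakeInstance n) (i : Fin n) {a b : ℝ}
    (h0 : 0 ≤ a) (hab : a ≤ b) (h1 : b ≤ 1) : 0 ≤ C.ival i a b := by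
  apply intervalIntegral.integral_nonneg hab
  intro u hu
  exact C.nonneg i u ⟨le_trans h0 hu.1, le_trans hu.2 h1⟩

lemma aux_split {n : ℕ} (C : CakeInstance n) (i : Fin n) {a b c : ℝ}
    (h0 : 0 ≤ a) (hab : a ≤ b) (hbc : b ≤ c) (h1 : c ≤ 1) :
    C.ival i a c = C.ival i a b + C.ival i b c := by
  have h1' : a ≤ 1 := le_trans hab (le_trans hbc h1)
  have h0' : 0 ≤ c := le_trans h0 (le_trans hab hbc)
  exact (intervalIntegral.integral_add_adjacent_intervals
    (aux_intble C i ⟨h0, h1'⟩ ⟨le_trans h0 hab, le_trans hbc h1⟩)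
    (aux_intble C i ⟨le_trans h0 hab, le_trans hbc h1⟩ ⟨h0', h1⟩)).symm

lemma aux_mono {n : ℕ} (C : CakeInstance n) (i : Fin n) {a p q b : ℝ}
    (h0 : 0 ≤ a) (hap : a ≤ p) (hpq : p ≤ q) (hqb : q ≤ b) (h1 : b ≤ 1) :
    C.ival i p q ≤ C.ival i a b := by
  have e1 : C.ival i a b = C.ival i a p + C.ival i p b :=
    aux_split C i h0 hap (le_trans hpq hqb) h1
  have e2 : C.ival i p b = C.ival i p q + C.ival i q b :=
    aux_split C i (le_trans h0 hap) hpq hqb h1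
  have n1 := aux_nonneg C i h0 hap (le_trans (le_trans hpq hqb) h1)
  have n2 := aux_nonneg C i (le_trans (le_trans h0 hap) hpq) hqb h1
  linarith

lemma aux_sum_pieces {n N : ℕ} (C : CakeInstance n) (i : Fin n)
    (c : Fin (N+1) → ℝ) (mono : Monotone c) (first : c 0 = 0) (last : c (Fin.last N) = 1) :
    ∑ t : Fin N, C.ival i (c t.castSucc) (c t.succ) = 1 := by
  have hbd : ∀ t, c t ∈ Set.Icc (0:ℝ) 1 := by
    intro t
    constructor
    · rw [← first]; exact mono (Fin.zero_le t)
    · rw [← last]; exact mono (Fin.le_last t)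
  set g : ℕ → ℝ := fun k => c ⟨min k N, by omega⟩ with hg
  have hgbd : ∀ k, g k ∈ Set.Icc (0:ℝ) 1 := fun k => hbd _
  have key : ∑ k ∈ Finset.range N, ∫ x in (g k)..(g (k+1)), C.d i x
      = ∫ x in (g 0)..(g N), C.d i x :=
    intervalIntegral.sum_integral_adjacent_intervals
      (fun k _ => aux_intble C i (hgbd k) (hgbd (k+1)))
  have hg0 : g 0 = 0 := by rw [hg]; simpa using first
  have hgN : g N = 1 := by
    rw [hg]; simp only [min_self]; simpa [Fin.last] using last
  have hcast : ∀ t : Fin N, c t.castSucc = g t ∧ c t.succ = g (t+1 : ℕ) := by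
    intro t
    constructor
    · rw [hg]; congr 1; ext; simp [Nat.min_eq_left (le_of_lt t.2)]
    · rw [hg]; congr 1; ext; simp [Nat.min_eq_left t.2]
  calc ∑ t : Fin N, C.ival i (c t.castSucc) (c t.succ)
      = ∑ t : Fin N, (fun k => C.ival i (g k) (g (k+1))) (t : ℕ) := by
        apply Finset.sum_congr rfl
        intro t _
        rw [(hcast t).1, (hcast t).2]
    _ = ∑ k ∈ Finset.range N, C.ival i (g k) (g (k+1)) :=
        Fin.sum_univ_eq_sum_range (fun k => C.ival i (g k) (g (k+1))) N
    _ = 1 := by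
        show ∑ k ∈ Finset.range N, ∫ x in (g k)..(g (k+1)), C.d i x = 1
        rw [key, hg0, hgN, C.total i]

def mkAFin (n : ℕ) (sFun : Fin n → Fin (n*2)) : Fin (n+1) → Fin (n*2+1) := fun m =>
  if h : (m:ℕ) = 0 then 0
  else if h2 : (m:ℕ) = n then Fin.last (n*2)
  else (sFun ⟨m, by have := m.2; omega⟩).castSucc

lemma mkAFin_zero (n : ℕ) (sFun : Fin n → Fin (n*2)) : mkAFin n sFun 0 = 0 := by
  simp [mkAFin]

lemma mkAFin_last (n : ℕ) (hn : 1 ≤ n) (sFun : Fin n → Fin (n*2)) :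
    mkAFin n sFun (Fin.last n) = Fin.last (n*2) := by
  simp [mkAFin, Fin.last]

lemma mkAFin_castSucc_le (n : ℕ) (sFun : Fin n → Fin (n*2)) (m : Fin n) :
    mkAFin n sFun m.castSucc ≤ (sFun m).castSucc := by
  by_cases h : (m:ℕ) = 0
  · have : mkAFin n sFun m.castSucc = 0 := by simp [mkAFin, h]
    rw [this]; exact Fin.zero_le _
  · have h2 : ((m.castSucc : Fin (n+1)) : ℕ) ≠ n := by have := m.2; simp; omega
    have : mkAFin n sFun m.castSucc = (sFun m).castSucc := by
      simp only [mkAFin, Fin.coe_castSucc, dif_neg h, dif_neg (by simpa using h2)]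
    rw [this]

lemma mkAFin_succ_ge (n : ℕ) (sFun : Fin n → Fin (n*2)) (hs : StrictMono sFun) (m : Fin n) :
    (sFun m).succ ≤ mkAFin n sFun m.succ := by
  have hne : ((m.succ : Fin (n+1)) : ℕ) ≠ 0 := by simp
  by_cases h2 : ((m.succ : Fin (n+1)) : ℕ) = n
  · have : mkAFin n sFun m.succ = Fin.last (n*2) := by
      simp only [mkAFin, dif_neg hne, dif_pos h2]
    rw [this]; exact Fin.le_last _
  · have hlt : (m:ℕ) + 1 < n := by have := m.2; simp at h2; omega
    have : mkAFin n sFun m.succ = (sFun ⟨(m:ℕ)+1, hlt⟩).castSucc := by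
      simp only [mkAFin, dif_neg hne, dif_neg h2]
      congr 1
    rw [this]
    have hlt2 : sFun m < sFun ⟨(m:ℕ)+1, hlt⟩ := hs (by simp [Fin.lt_def])
    rw [Fin.le_def, Fin.lt_def] at *
    simpa using hlt2

lemma mkAFin_mono (n : ℕ) (sFun : Fin n → Fin (n*2)) (hs : StrictMono sFun) :
    Monotone (mkAFin n sFun) := by
  rw [Fin.monotone_iff_le_succ]
  intro m
  exact le_trans (mkAFin_castSucc_le n sFun m)
    (le_trans (le_of_lt (Fin.castSucc_lt_succ)) (mkAFin_succ_ge n sFun hs m))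

end Helpers

/-- In an instance in `X(2)` there is an envy-free contiguous allocation
giving each player (an interval containing) the more valuable of his two owned pieces;
in particular it has utilitarian welfare at least `n/2`, and hence every envy-free
contiguous allocation of maximal utilitarian welfare has welfare at least `n/2`. -/


theorem two_pieces_ef_welfare (n : ℕ) (hn : 1 ≤ n) (C : CakeInstance n)
    (W : XkWitness C 2) :
    (∃ A : ContigAlloc n, cEnvyFree C A ∧
        (∀ i : Fin n, ∃ j : Fin (n*2), W.owner j = i ∧
          (∀ j' : Fin (n*2), W.owner j' = i → W.pieceVal i j' ≤ W.pieceVal i j) ∧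
          W.pieceSet j ⊆ cpiece A i) ∧
        (n:ℝ)/2 ≤ cWelfare C A) ∧
    (∀ B : ContigAlloc n, cEnvyFree C B →
        (∀ B' : ContigAlloc n, cEnvyFree C B' → cWelfare C B' ≤ cWelfare C B) →
        (n:ℝ)/2 ≤ cWelfare C B) := by
  classical
  have hcbd : ∀ t, W.c t ∈ Set.Icc (0:ℝ) 1 := by
    intro t
    constructor
    · rw [← W.first]; exact W.mono.monotone (Fin.zero_le t)
    · rw [← W.last]; exact W.mono.monotone (Fin.le_last t)
  have hcle : ∀ t : Fin (n*2), W.c t.castSucc ≤ W.c t.succ :=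
    fun t => W.mono.monotone (le_of_lt (Fin.castSucc_lt_succ))
  have hsum : ∀ i, ∑ t : Fin (n*2), W.pieceVal i t = 1 := fun i =>
    aux_sum_pieces C i W.c W.mono.monotone W.first W.last
  have hex : ∀ i : Fin n, ∃ j, W.owner j = i ∧
      ∀ j', W.owner j' = i → W.pieceVal i j' ≤ W.pieceVal i j := by
    intro i
    have hne : (Finset.univ.filter fun j => W.owner j = i).Nonempty := by
      apply Finset.card_pos.mp; rw [W.ownCount]; norm_num
    obtain ⟨b, hb, hmaxb⟩ := Finset.exists_max_image _ (W.pieceVal i) hne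
    exact ⟨b, (Finset.mem_filter.mp hb).2,
      fun j' hj' => hmaxb j' (Finset.mem_filter.mpr ⟨Finset.mem_univ _, hj'⟩)⟩
  choose chosen hown hmax using hex
  have hhalf : ∀ i, (1:ℝ)/2 ≤ W.pieceVal i (chosen i) := by
    intro i
    have h1 : (1:ℝ) = ∑ t : Fin (n*2), W.pieceVal i t := (hsum i).symm
    have h2 : ∑ t : Fin (n*2), W.pieceVal i t ≤
        ∑ t : Fin (n*2), (if W.owner t = i then W.pieceVal i (chosen i) else 0) := by
      apply Finset.sum_le_sum
      intro t _
      by_cases h : W.owner t = i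
      · rw [if_pos h]; exact hmax i t h
      · rw [if_neg h]
        exact le_of_eq (W.zeroVal i t h)
    have h3 : ∑ t : Fin (n*2), (if W.owner t = i then W.pieceVal i (chosen i) else 0)
        = 2 * W.pieceVal i (chosen i) := by
      rw [← Finset.sum_filter, Finset.sum_const, W.ownCount i]
      simp
    linarith
  have hinj : Function.Injective chosen := fun a b h => by rw [← hown a, ← hown b, h]
  let T : Finset (Fin (n*2)) := Finset.image chosen Finset.univ
  have hTcard : T.card = n := by
    show (Finset.image chosen Finset.univ).card = n
    rw [Finset.card_image_of_injective _ hinj, Finset.card_univ, Fintype.card_fin]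
  let e := T.orderIsoOfFin hTcard
  let sFun : Fin n → Fin (n*2) := fun m => (e m : Fin (n*2))
  have hsmono : StrictMono sFun := fun a b h => Subtype.coe_lt_coe.mpr (e.strictMono h)
  have hsT : ∀ m, sFun m ∈ T := fun m => (e m).2
  have hπs : ∀ m, chosen (W.owner (sFun m)) = sFun m := by
    intro m
    obtain ⟨i, _, hi⟩ := Finset.mem_image.mp (hsT m)
    rw [← hi, hown i]
  let π : Fin n → Fin n := fun m => W.owner (sFun m)
  have hπinj : Function.Injective π := by
    intro a b h
    apply hsmono.injective
    rw [← hπs a, ← hπs b]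
    exact congrArg chosen h
  let σ : Equiv.Perm (Fin n) := Equiv.ofBijective π (Finite.injective_iff_bijective.mp hπinj)
  have hσs : ∀ i, sFun (σ.symm i) = chosen i := by
    intro i
    have h1 : π (σ.symm i) = i := σ.apply_symm_apply i
    have h2 := hπs (σ.symm i)
    rw [show W.owner (sFun (σ.symm i)) = π (σ.symm i) from rfl, h1] at h2
    exact h2.symm
  let aFin : Fin (n+1) → Fin (n*2+1) := mkAFin n sFun
  have haMono : Monotone aFin := mkAFin_mono n sFun hsmono
  let A : ContigAlloc n := {
    x := fun m => W.c (aFin m)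
    mono := fun a b h => W.mono.monotone (haMono h)
    first := by
      show W.c (aFin 0) = 0
      rw [show aFin 0 = 0 from mkAFin_zero n sFun, W.first]
    last := by
      show W.c (aFin (Fin.last n)) = 1
      rw [show aFin (Fin.last n) = Fin.last (n*2) from mkAFin_last n hn sFun, W.last]
    σ := σ }
  have hxbd : ∀ m, A.x m ∈ Set.Icc (0:ℝ) 1 := fun m => hcbd _
  have hkey : ∀ i : Fin n,
      A.x (σ.symm i).castSucc ≤ W.c (chosen i).castSucc ∧
      W.c (chosen i).succ ≤ A.x (σ.symm i).succ := by
    intro i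
    constructor
    · have h := mkAFin_castSucc_le n sFun (σ.symm i)
      rw [hσs i] at h
      exact W.mono.monotone h
    · have h := mkAFin_succ_ge n sFun hsmono (σ.symm i)
      rw [hσs i] at h
      exact W.mono.monotone h
  have hvali : ∀ i : Fin n, W.pieceVal i (chosen i) ≤ cval C A i i := by
    intro i
    show W.pieceVal i (chosen i) ≤ C.ival i (A.x (σ.symm i).castSucc) (A.x (σ.symm i).succ)
    exact aux_mono C i (hxbd _).1 (hkey i).1 (hcle _) (hkey i).2 (hxbd _).2
  have hEF : cEnvyFree C A := by
    intro i j
    have hcv : cval C A i j = C.ival i (A.x (σ.symm j).castSucc) (A.x (σ.symm j).succ) := rfl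
    rcases lt_trichotomy (σ.symm i) (σ.symm j) with hlt | heq | hgt
    · have hle1 : A.x (σ.symm i).succ ≤ A.x (σ.symm j).castSucc := by
        apply A.mono
        rw [Fin.le_def]
        rw [Fin.lt_def] at hlt
        simpa using Nat.succ_le_of_lt hlt
      have hp : W.c (chosen i).succ ≤ A.x (σ.symm j).castSucc :=
        le_trans (hkey i).2 hle1
      have hM : W.pieceVal i (chosen i) ≤ C.ival i 0 (A.x (σ.symm j).castSucc) :=
        aux_mono C i le_rfl (hcbd _).1 (hcle _) hp (hxbd _).2
      have hsplit1 : C.ival i 0 1 = C.ival i 0 (A.x (σ.symm j).castSucc)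
          + C.ival i (A.x (σ.symm j).castSucc) 1 :=
        aux_split C i le_rfl (hxbd _).1 (hxbd _).2 le_rfl
      have hsplit2 : C.ival i (A.x (σ.symm j).castSucc) 1
          = C.ival i (A.x (σ.symm j).castSucc) (A.x (σ.symm j).succ)
            + C.ival i (A.x (σ.symm j).succ) 1 :=
        aux_split C i (hxbd _).1 (A.mono (le_of_lt (Fin.castSucc_lt_succ))) (hxbd _).2 le_rfl
      have hnn : 0 ≤ C.ival i (A.x (σ.symm j).succ) 1 :=
        aux_nonneg C i (hxbd _).1 (hxbd _).2 le_rfl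
      have h11 : C.ival i 0 1 = 1 := C.total i
      have ha := hhalf i
      have hb := hvali i
      rw [hcv]; linarith
    · have hcvi : cval C A i i = C.ival i (A.x (σ.symm i).castSucc) (A.x (σ.symm i).succ) := rfl
      rw [hcv, hcvi, heq]
    · have hle1 : A.x (σ.symm j).succ ≤ A.x (σ.symm i).castSucc := by
        apply A.mono
        rw [Fin.le_def]
        rw [Fin.lt_def] at hgt
        simpa using Nat.succ_le_of_lt hgt
      have hp : A.x (σ.symm j).succ ≤ W.c (chosen i).castSucc :=
        le_trans hle1 (hkey i).1
      have hM : W.pieceVal i (chosen i) ≤ C.ival i (A.x (σ.symm j).succ) 1 :=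
        aux_mono C i (hxbd _).1 hp (hcle _) (hcbd _).2 le_rfl
      have hsplit1 : C.ival i 0 1 = C.ival i 0 (A.x (σ.symm j).succ)
          + C.ival i (A.x (σ.symm j).succ) 1 :=
        aux_split C i le_rfl (hxbd _).1 (hxbd _).2 le_rfl
      have hsplit2 : C.ival i 0 (A.x (σ.symm j).succ)
          = C.ival i 0 (A.x (σ.symm j).castSucc)
            + C.ival i (A.x (σ.symm j).castSucc) (A.x (σ.symm j).succ) :=
        aux_split C i le_rfl (hxbd _).1 (A.mono (le_of_lt (Fin.castSucc_lt_succ))) (hxbd _).2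
      have hnn : 0 ≤ C.ival i 0 (A.x (σ.symm j).castSucc) :=
        aux_nonneg C i le_rfl (hxbd _).1 (hxbd _).2
      have h11 : C.ival i 0 1 = 1 := C.total i
      have ha := hhalf i
      have hb := hvali i
      rw [hcv]; linarith
  have hwel : (n:ℝ)/2 ≤ cWelfare C A := by
    have hhalfc : ∀ i : Fin n, (1:ℝ)/2 ≤ cval C A i i :=
      fun i => le_trans (hhalf i) (hvali i)
    have hconst : (n:ℝ)/2 = ∑ _i : Fin n, (1:ℝ)/2 := by
      rw [Finset.sum_const, Finset.card_univ, Fintype.card_fin, nsmul_eq_mul]; ring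
    calc (n:ℝ)/2 = ∑ _i : Fin n, (1:ℝ)/2 := hconst
      _ ≤ ∑ i, cval C A i i := Finset.sum_le_sum (fun i _ => hhalfc i)
      _ = cWelfare C A := rfl
  have hcontain : ∀ i : Fin n, W.pieceSet (chosen i) ⊆ cpiece A i := by
    intro i
    exact Set.Icc_subset_Icc (hkey i).1 (hkey i).2
  refine ⟨⟨A, hEF, fun i => ⟨chosen i, hown i, hmax i, hcontain i⟩, hwel⟩, ?_⟩
  intro B hB hBmax
  exact le_trans hwel (hBmax A hEF)
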